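/- Let p and q be distinct nonconstant meromorphic functions on a compact Riemann surface X of genus g, and let S = {α ∈ ℂ∞ : p⁻¹(α) = q⁻¹(α)}. Then S is a finite set. -/

import Mathlib

open OnePoint Topology Manifold

/-- The finite part of a point of the Riemann sphere `OnePoint ℂ` (junk value `0` at `∞`). -/
noncomputable def down : OnePoint ℂ → ℂ :=
  OnePoint.rec (0 : ℂ) id

open Classical in
/-- Inversion `w ↦ 1/w` on the Riemann sphere, interchanging `0` and `∞`. -/
noncomputable def sphereInv (w : OnePoint ℂ) : OnePoint ℂ :=
  if w = (∞ : OnePoint ℂ) then (((0 : ℂ)) : OnePoint ℂ)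
  else if w = (((0 : ℂ)) : OnePoint ℂ) then ∞
  else (((down w)⁻¹ : ℂ) : OnePoint ℂ)

variable {X : Type*} [TopologicalSpace X] [ChartedSpace ℂ X]

/-- A `ℂ`-valued function on a Riemann surface is holomorphic at `x` if it is analytic
when read through a chart at `x`. -/
def HoloAt (f : X → ℂ) (x : X) : Prop :=
  AnalyticAt ℂ (f ∘ (chartAt ℂ x).symm) ((chartAt ℂ x) x)

/-- A sphere-valued function is meromorphic (holomorphic as a map to `ℂ∞`) at `x`:
either it avoids `∞` at `x` and its finite part is holomorphic there, or it avoids `0`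
at `x` and the finite part of its reciprocal is holomorphic there. -/
def MeromAt (f : X → OnePoint ℂ) (x : X) : Prop :=
  (f x ≠ ∞ ∧ HoloAt (fun y => down (f y)) x) ∨
  (f x ≠ (((0 : ℂ)) : OnePoint ℂ) ∧ HoloAt (fun y => down (sphereInv (f y))) x)

/-- A holomorphic map `X → ℂ∞`, i.e. a meromorphic function on the Riemann surface `X`. -/
def HolomorphicToSphere (f : X → OnePoint ℂ) : Prop :=
  Continuous f ∧ ∀ x, MeromAt f x

/-- The function is nonconstant. -/
def Nonconst (f : X → OnePoint ℂ) : Prop := ¬ ∃ c, ∀ x, f x = c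

/-- The degree of a nonconstant holomorphic map from a compact Riemann surface to the
Riemann sphere: the largest cardinality of a (set-theoretic) fiber, which is attained
at every unramified fiber. -/
noncomputable def sphDeg (f : X → OnePoint ℂ) : ℕ :=
  sSup (Set.range fun y : OnePoint ℂ => (f ⁻¹' {y}).ncard)

/-- The local multiplicity of `f` at `x`: the largest `n` such that every neighborhood
of `x` contains `n` preimages of some single value. -/
noncomputable def locMult (f : X → OnePoint ℂ) (x : X) : ℕ :=
  sSup {n : ℕ | ∀ U ∈ nhds x, ∃ y, n ≤ (U ∩ f ⁻¹' {y}).ncard}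

/-- `X` has genus `g`, characterized by the Riemann–Hurwitz formula
`2g - 2 = -2 deg f + Σ_x (mult_f(x) - 1)` for every nonconstant meromorphic `f` on `X`. -/
def HasGenus (X : Type*) [TopologicalSpace X] [ChartedSpace ℂ X] (g : ℕ) : Prop :=
  ∀ f : X → OnePoint ℂ, HolomorphicToSphere f → Nonconst f →
    2 * (g : ℤ) - 2 = -2 * (sphDeg f : ℤ) + ∑ᶠ x, ((locMult f x : ℤ) - 1)


section Aux
open Filter Set


lemma down_coe (a : ℂ) : down (a : OnePoint ℂ) = a := rfl

lemma coe_down {w : OnePoint ℂ} (h : w ≠ ∞) : ((down w : ℂ) : OnePoint ℂ) = w := by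
  induction w using OnePoint.rec with
  | infty => exact absurd rfl h
  | coe a => rfl

lemma sphereInv_infty : sphereInv (∞ : OnePoint ℂ) = ((0:ℂ) : OnePoint ℂ) := by
  simp [sphereInv]

lemma sphereInv_zero : sphereInv (((0:ℂ)) : OnePoint ℂ) = ∞ := by
  simp [sphereInv, OnePoint.coe_ne_infty]

lemma sphereInv_coe {a : ℂ} (ha : a ≠ 0) :
    sphereInv ((a : ℂ) : OnePoint ℂ) = ((a⁻¹ : ℂ) : OnePoint ℂ) := by
  have h1 : ((a : ℂ) : OnePoint ℂ) ≠ ∞ := OnePoint.coe_ne_infty a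
  have h2 : ((a : ℂ) : OnePoint ℂ) ≠ (((0:ℂ)) : OnePoint ℂ) := by
    simpa [OnePoint.coe_eq_coe] using ha
  simp [sphereInv, h1, h2, down_coe]

lemma sphereInv_sphereInv (w : OnePoint ℂ) : sphereInv (sphereInv w) = w := by
  induction w using OnePoint.rec with
  | infty => rw [sphereInv_infty, sphereInv_zero]
  | coe a =>
    by_cases ha : a = 0
    · subst ha; rw [sphereInv_zero, sphereInv_infty]
    · rw [sphereInv_coe ha, sphereInv_coe (inv_ne_zero ha), inv_inv]

lemma sphereInv_inj : Function.Injective sphereInv :=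
  Function.LeftInverse.injective sphereInv_sphereInv

lemma sphereInv_ne_infty {w : OnePoint ℂ} (h : w ≠ (((0:ℂ)) : OnePoint ℂ)) :
    sphereInv w ≠ ∞ := by
  induction w using OnePoint.rec with
  | infty => rw [sphereInv_infty]; exact OnePoint.coe_ne_infty 0
  | coe a =>
    have ha : a ≠ 0 := by simpa [OnePoint.coe_eq_coe] using h
    rw [sphereInv_coe ha]; exact OnePoint.coe_ne_infty _

lemma sphereInv_eq_infty_iff {w : OnePoint ℂ} :
    sphereInv w = ∞ ↔ w = (((0:ℂ)) : OnePoint ℂ) := by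
  constructor
  · intro h; by_contra h0; exact sphereInv_ne_infty h0 h
  · intro h; subst h; exact sphereInv_zero

variable {X : Type*} [TopologicalSpace X] [ChartedSpace ℂ X]

/-- Local representation of a meromorphic map in the chart at `x`. -/
lemma localRep {f : X → OnePoint ℂ} {x : X} (hf : Continuous f) (hm : MeromAt f x) :
    ∃ F : ℂ → ℂ, AnalyticAt ℂ F ((chartAt ℂ x) x) ∧
      ((f x ≠ ∞ ∧ ∀ᶠ z in nhds ((chartAt ℂ x) x),
          f ((chartAt ℂ x).symm z) = ((F z : ℂ) : OnePoint ℂ)) ∨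
       (f x = ∞ ∧ ∀ᶠ z in nhds ((chartAt ℂ x) x),
          f ((chartAt ℂ x).symm z) = sphereInv ((F z : ℂ) : OnePoint ℂ))) := by
  set e := chartAt ℂ x with he
  have hxs : x ∈ e.source := mem_chart_source ℂ x
  have hz0 : e x ∈ e.target := e.map_source hxs
  have hsymm : ContinuousAt e.symm (e x) := e.continuousAt_symm hz0
  have hsx : e.symm (e x) = x := e.left_inv hxs
  have hcont : ContinuousAt (fun z => f (e.symm z)) (e x) := by
    have : ContinuousAt f (e.symm (e x)) := hf.continuousAt
    exact this.comp hsymm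
  rcases hm with ⟨hne, hA⟩ | ⟨hne, hB⟩
  · refine ⟨(fun y => down (f y)) ∘ e.symm, hA, Or.inl ⟨hne, ?_⟩⟩
    have h1 : ∀ᶠ z in nhds (e x), f (e.symm z) ≠ ∞ := by
      have : f (e.symm (e x)) ≠ ∞ := by rw [hsx]; exact hne
      exact hcont.eventually_ne this
    filter_upwards [h1] with z hz
    exact (coe_down hz).symm
  · by_cases hinf : f x = ∞
    · refine ⟨(fun y => down (sphereInv (f y))) ∘ e.symm, hB, Or.inr ⟨hinf, ?_⟩⟩
      have h1 : ∀ᶠ z in nhds (e x), f (e.symm z) ≠ (((0:ℂ)) : OnePoint ℂ) := by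
        have : f (e.symm (e x)) ≠ (((0:ℂ)) : OnePoint ℂ) := by rw [hsx]; exact hne
        exact hcont.eventually_ne this
      filter_upwards [h1] with z hz
      have h2 : sphereInv (f (e.symm z)) ≠ ∞ := sphereInv_ne_infty hz
      simp only [Function.comp_apply]
      rw [coe_down h2, sphereInv_sphereInv]
    · -- f x ≠ ∞ and f x ≠ 0 : invert the reciprocal representation
      have hH0 : ((fun y => down (sphereInv (f y))) ∘ e.symm) (e x) ≠ 0 := by
        simp only [Function.comp_apply, hsx]
        obtain ⟨a, ha⟩ := OnePoint.ne_infty_iff_exists.mp hinf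
        have ha : f x = (a : OnePoint ℂ) := ha.symm
        have ha0 : a ≠ 0 := by rw [ha] at hne; simpa [OnePoint.coe_eq_coe] using hne
        rw [ha, sphereInv_coe ha0, down_coe]
        exact inv_ne_zero ha0
      refine ⟨fun z => (((fun y => down (sphereInv (f y))) ∘ e.symm) z)⁻¹,
        hB.inv hH0, Or.inl ⟨hinf, ?_⟩⟩
      have h1 : ∀ᶠ z in nhds (e x), f (e.symm z) ≠ (((0:ℂ)) : OnePoint ℂ) := by
        have : f (e.symm (e x)) ≠ (((0:ℂ)) : OnePoint ℂ) := by rw [hsx]; exact hne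
        exact hcont.eventually_ne this
      have h2 : ∀ᶠ z in nhds (e x), f (e.symm z) ≠ ∞ := by
        have : f (e.symm (e x)) ≠ ∞ := by rw [hsx]; exact hinf
        exact hcont.eventually_ne this
      filter_upwards [h1, h2] with z hz0 hzinf
      obtain ⟨a, ha⟩ := OnePoint.ne_infty_iff_exists.mp hzinf
      have ha : f (e.symm z) = (a : OnePoint ℂ) := ha.symm
      have ha0 : a ≠ 0 := by rw [ha] at hz0; simpa [OnePoint.coe_eq_coe] using hz0
      simp only [Function.comp_apply, ha, sphereInv_coe ha0, down_coe, inv_inv]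

/-- Local dichotomy: at a coincidence point, either `p = q` near `x` or the coincidence
is isolated at `x`. -/
lemma local_dichotomy {p q : X → OnePoint ℂ} {x : X}
    (hpc : Continuous p) (hqc : Continuous q)
    (hmp : MeromAt p x) (hmq : MeromAt q x) (hx : p x = q x) :
    (∀ᶠ y in nhds x, p y = q y) ∨ (∀ᶠ y in nhds x, y ≠ x → p y ≠ q y) := by
  set e := chartAt ℂ x with he
  have hxs : x ∈ e.source := mem_chart_source ℂ x
  have hsx : e.symm (e x) = x := e.left_inv hxs
  have hte : Filter.Tendsto e (nhds x) (nhds (e x)) := e.continuousAt hxs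
  have hsrc : ∀ᶠ y in nhds x, y ∈ e.source := e.open_source.eventually_mem hxs
  obtain ⟨F, hF, hFr⟩ := localRep hpc hmp
  obtain ⟨G, hG, hGr⟩ := localRep hqc hmq
  -- eventual iff in the chart
  have hiff : ∀ᶠ z in nhds (e x), (p (e.symm z) = q (e.symm z) ↔ F z = G z) := by
    rcases hFr with ⟨hpinf, hFr⟩ | ⟨hpinf, hFr⟩ <;>
      rcases hGr with ⟨hqinf, hGr⟩ | ⟨hqinf, hGr⟩
    · filter_upwards [hFr, hGr] with z h1 h2
      rw [h1, h2, OnePoint.coe_eq_coe]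
    · exact absurd (hx.trans hqinf) hpinf
    · exact absurd (hx.symm.trans hpinf) hqinf
    · filter_upwards [hFr, hGr] with z h1 h2
      rw [h1, h2]
      exact ⟨fun h => OnePoint.coe_eq_coe.mp (sphereInv_inj h),
        fun h => by rw [h]⟩
  -- pull the iff back to X
  have hiffX : ∀ᶠ y in nhds x, (p y = q y ↔ F (e y) = G (e y)) := by
    filter_upwards [hte.eventually hiff, hsrc] with y h1 h2
    rwa [e.left_inv h2] at h1
  rcases (hF.sub hG).eventually_eq_zero_or_eventually_ne_zero with hzero | hnz
  · left
    have : ∀ᶠ z in nhds (e x), F z = G z := by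
      filter_upwards [hzero] with z hz; exact sub_eq_zero.mp hz
    filter_upwards [hte.eventually this, hiffX] with y h1 h2
    exact h2.mpr h1
  · right
    rw [eventually_nhdsWithin_iff] at hnz
    filter_upwards [hte.eventually hnz, hiffX, hsrc] with y h1 h2 h3 hyx
    intro hpq
    have heyne : e y ≠ e x := fun h => hyx (e.injOn h3 hxs h)
    exact (h1 (Set.mem_compl_singleton_iff.mpr heyne)) (sub_eq_zero.mpr (h2.mp hpq))

/-- Identity theorem: if `p = q` near one point, then `p = q` everywhere. -/
lemma eq_of_eventuallyEq [ConnectedSpace X] {p q : X → OnePoint ℂ}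
    (hp : HolomorphicToSphere p) (hq : HolomorphicToSphere q)
    {x₀ : X} (h₀ : ∀ᶠ y in nhds x₀, p y = q y) : p = q := by
  set A : Set X := {x | ∀ᶠ y in nhds x, p y = q y} with hA
  have hopen : IsOpen A := by
    rw [isOpen_iff_mem_nhds]
    intro x hx
    filter_upwards [hx.eventually_nhds] with y hy using hy
  have hclosed : IsClosed A := by
    rw [← closure_eq_iff_isClosed]
    refine Set.Subset.antisymm ?_ subset_closure
    intro x hx
    have hE : p x = q x := by
      have hEc : IsClosed {y | p y = q y} := isClosed_eq hp.1 hq.1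
      exact hEc.closure_subset (closure_mono (fun y hy => hy.self_of_nhds) hx)
    rcases local_dichotomy hp.1 hq.1 (hp.2 x) (hq.2 x) hE with hl | hr
    · exact hl
    · -- x is a cluster point of A; combined with isolation, x ∈ A
      have hfreq : ∃ᶠ y in nhds x, y ∈ A := mem_closure_iff_frequently.mp hx
      have := (hfreq.and_eventually hr).exists
      obtain ⟨y, hyA, hy⟩ := this
      by_cases hyx : y = x
      · exact hyx ▸ hyA
      · exact absurd hyA.self_of_nhds (hy hyx)
  have : A = Set.univ :=
    (isClopen_iff.mp ⟨hclosed, hopen⟩).resolve_left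
      (Set.nonempty_iff_ne_empty.mp ⟨x₀, h₀⟩)
  funext y
  exact ((this ▸ Set.mem_univ y : y ∈ A)).self_of_nhds

/-- The coincidence set of two distinct holomorphic maps is finite. -/
lemma coincidence_finite [CompactSpace X] [ConnectedSpace X] {p q : X → OnePoint ℂ}
    (hp : HolomorphicToSphere p) (hq : HolomorphicToSphere q) (hne : p ≠ q) :
    {x | p x = q x}.Finite := by
  set E : Set X := {x | p x = q x} with hE
  have hEc : IsClosed E := isClosed_eq hp.1 hq.1
  have hcomp : IsCompact E := hEc.isCompact
  have hU : ∀ x ∈ E, ∃ U ∈ nhds x, ∀ y ∈ U, y ≠ x → y ∉ E := by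
    intro x hx
    rcases local_dichotomy hp.1 hq.1 (hp.2 x) (hq.2 x) hx with hl | hr
    · exact absurd (eq_of_eventuallyEq hp hq hl) hne
    · exact ⟨_, hr, fun y hy hyx hyE => hy hyx hyE⟩
  choose! U hU1 hU2 using hU
  obtain ⟨t, htE, ht⟩ := hcomp.elim_nhds_subcover U (fun x hx => hU1 x hx)
  refine Set.Finite.subset t.finite_toSet ?_
  intro x hx
  obtain ⟨y, hyt, hyU⟩ := Set.mem_iUnion₂.mp (ht hx)
  by_cases hxy : x = y
  · exact hxy ▸ hyt
  · exact absurd hx (hU2 y (htE y hyt) x hyU hxy)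

lemma holo_const (c : OnePoint ℂ) : HolomorphicToSphere (fun _ : X => c) := by
  refine ⟨continuous_const, fun x => ?_⟩
  by_cases hc : c = ∞
  · subst hc
    exact Or.inr ⟨OnePoint.infty_ne_coe 0, analyticAt_const⟩
  · exact Or.inl ⟨hc, analyticAt_const⟩

lemma not_eventually_const [ConnectedSpace X] {p : X → OnePoint ℂ}
    (hp : HolomorphicToSphere p) (hpc : Nonconst p) (x : X) :
    ¬ ∀ᶠ y in nhds x, p y = p x := by
  intro h
  have := eq_of_eventuallyEq hp (holo_const (p x)) h
  exact hpc ⟨p x, fun y => congrFun this y⟩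

/-- `sphereInv` maps neighborhoods of `0` to neighborhoods of `∞` (image filter). -/
lemma sphereInv_image_nhds_zero {s : Set (OnePoint ℂ)}
    (hs : s ∈ nhds (((0:ℂ)) : OnePoint ℂ)) : sphereInv '' s ∈ nhds (∞ : OnePoint ℂ) := by
  have h0 : (fun a : ℂ => ((a : ℂ) : OnePoint ℂ)) ⁻¹' s ∈ nhds (0 : ℂ) := by
    have := OnePoint.isOpenEmbedding_coe (X := ℂ)
    rw [← this.map_nhds_eq 0] at hs
    exact hs
  obtain ⟨ε, hε, hball⟩ := Metric.mem_nhds_iff.mp h0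
  rw [OnePoint.nhds_infty_eq]
  refine Filter.mem_sup.mpr ⟨?_, ?_⟩
  · -- coclosedCompact part
    rw [Filter.mem_map]
    refine Filter.mem_of_superset
      ((Filter.hasBasis_coclosedCompact).mem_of_mem
        (⟨Metric.isClosed_closedBall (x := (0:ℂ)) (ε := ε⁻¹), isCompact_closedBall 0 ε⁻¹⟩ :
          IsClosed (Metric.closedBall (0:ℂ) ε⁻¹) ∧ IsCompact (Metric.closedBall (0:ℂ) ε⁻¹))) ?_
    intro b hb
    simp only [Set.mem_compl_iff, Metric.mem_closedBall, Complex.dist_eq, sub_zero,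
      not_le] at hb
    have hb0 : b ≠ 0 := by
      intro h; rw [h] at hb; simp only [norm_zero] at hb
      exact absurd hb (not_lt.mpr (inv_pos.mpr hε).le)
    have hmem : (b⁻¹ : ℂ) ∈ Metric.ball (0:ℂ) ε := by
      simp only [Metric.mem_ball, Complex.dist_eq, sub_zero, map_inv₀, norm_inv]
      rw [inv_lt_comm₀ (norm_pos_iff.mpr hb0) hε]
      exact hb
    refine Set.mem_preimage.mpr ⟨((b⁻¹ : ℂ) : OnePoint ℂ), hball hmem, ?_⟩
    rw [sphereInv_coe (inv_ne_zero hb0), inv_inv]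
  · -- pure ∞ part
    rw [Filter.mem_pure]
    exact ⟨(((0:ℂ)) : OnePoint ℂ), hball (Metric.mem_ball_self hε), sphereInv_zero⟩

lemma surjective_of_holo [CompactSpace X] [ConnectedSpace X] {p : X → OnePoint ℂ}
    (hp : HolomorphicToSphere p) (hpc : Nonconst p) : Function.Surjective p := by
  have hops : IsOpen (Set.range p) := by
    rw [isOpen_iff_mem_nhds]
    rintro b ⟨x, rfl⟩
    set e := chartAt ℂ x with he
    have hxs : x ∈ e.source := mem_chart_source ℂ x
    have hsx : e.symm (e x) = x := e.left_inv hxs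
    have hte : Filter.Tendsto e (nhds x) (nhds (e x)) := e.continuousAt hxs
    have hsrc : ∀ᶠ y in nhds x, y ∈ e.source := e.open_source.eventually_mem hxs
    obtain ⟨F, hF, hFr⟩ := localRep hp.1 (hp.2 x)
    rcases hFr with ⟨hpinf, hrep⟩ | ⟨hpinf, hrep⟩
    · -- finite case :  p = coe ∘ F in the chart
      have hself : p x = ((F (e x) : ℂ) : OnePoint ℂ) := by
        have := hrep.self_of_nhds; rwa [hsx] at this
      have hnc : ¬ ∀ᶠ z in nhds (e x), F z = F (e x) := by
        intro hc
        refine not_eventually_const hp hpc x ?_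
        filter_upwards [hte.eventually (hrep.and hc), hsrc] with y ⟨h1, h2⟩ h3
        rw [e.left_inv h3] at h1
        rw [h1, h2, ← hself]
      have hopen := hF.eventually_constant_or_nhds_le_map_nhds.resolve_left hnc
      have hmem2 : F '' {z | p (e.symm z) = ((F z : ℂ) : OnePoint ℂ)} ∈ nhds (F (e x)) :=
        hopen (Filter.image_mem_map hrep)
      have h1 : (fun a : ℂ => ((a : ℂ) : OnePoint ℂ)) ''
          (F '' {z | p (e.symm z) = ((F z : ℂ) : OnePoint ℂ)}) ∈ nhds (p x) := by
        rw [hself, ← OnePoint.isOpenEmbedding_coe.map_nhds_eq]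
        exact Filter.image_mem_map hmem2
      refine Filter.mem_of_superset h1 ?_
      rintro _ ⟨w, ⟨z, hz, rfl⟩, rfl⟩
      exact ⟨e.symm z, by simpa using hz⟩
    · -- pole case : p = sphereInv ∘ coe ∘ F in the chart
      have hself : p x = sphereInv ((F (e x) : ℂ) : OnePoint ℂ) := by
        have := hrep.self_of_nhds; rwa [hsx] at this
      have hF0 : F (e x) = 0 := by
        have : sphereInv ((F (e x) : ℂ) : OnePoint ℂ) = ∞ := by rw [← hself, hpinf]
        have := sphereInv_eq_infty_iff.mp this
        exact OnePoint.coe_eq_coe.mp this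
      have hnc : ¬ ∀ᶠ z in nhds (e x), F z = F (e x) := by
        intro hc
        refine not_eventually_const hp hpc x ?_
        filter_upwards [hte.eventually (hrep.and hc), hsrc] with y ⟨h1, h2⟩ h3
        rw [e.left_inv h3] at h1
        rw [h1, h2, ← hself]
      have hopen := hF.eventually_constant_or_nhds_le_map_nhds.resolve_left hnc
      have hmem2 : F '' {z | p (e.symm z) = sphereInv ((F z : ℂ) : OnePoint ℂ)}
          ∈ nhds (F (e x)) := hopen (Filter.image_mem_map hrep)
      have h1 : (fun a : ℂ => ((a : ℂ) : OnePoint ℂ)) ''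
          (F '' {z | p (e.symm z) = sphereInv ((F z : ℂ) : OnePoint ℂ)})
          ∈ nhds (((0:ℂ)) : OnePoint ℂ) := by
        rw [← OnePoint.isOpenEmbedding_coe.map_nhds_eq]
        exact Filter.image_mem_map (hF0 ▸ hmem2)
      have h2 := sphereInv_image_nhds_zero h1
      have hgoal : sphereInv '' ((fun a : ℂ => ((a : ℂ) : OnePoint ℂ)) ''
          (F '' {z | p (e.symm z) = sphereInv ((F z : ℂ) : OnePoint ℂ)})) ∈ nhds (p x) := by
        rw [hpinf]; exact h2
      refine Filter.mem_of_superset hgoal ?_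
      rintro _ ⟨_, ⟨w, ⟨z, hz, rfl⟩, rfl⟩, rfl⟩
      exact ⟨e.symm z, by simpa using hz⟩
  have hcls : IsClosed (Set.range p) := (isCompact_range hp.1).isClosed
  have hne : (Set.range p).Nonempty := Set.range_nonempty p
  have := (isClopen_iff.mp ⟨hcls, hops⟩).resolve_left (Set.nonempty_iff_ne_empty.mp hne)
  exact Set.range_eq_univ.mp this

end Aux

/-- If `p ≠ q` are nonconstant meromorphic functions on a compact Riemann surface of
genus `g`, then the set `S` of values `α ∈ ℂ∞` with `p⁻¹(α) = q⁻¹(α)` is finite. -/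
theorem stmt_6 {X : Type*} [TopologicalSpace X] [CompactSpace X] [T2Space X] [ConnectedSpace X]
    [ChartedSpace ℂ X] [IsManifold 𝓘(ℂ) (⊤ : WithTop ℕ∞) X] (g : ℕ) (hg : HasGenus X g)
    (p q : X → OnePoint ℂ) (hp : HolomorphicToSphere p) (hq : HolomorphicToSphere q)
    (hpc : Nonconst p) (hqc : Nonconst q) (hne : p ≠ q)
    (S : Set (OnePoint ℂ)) (hS : S = {α : OnePoint ℂ | p ⁻¹' {α} = q ⁻¹' {α}}) :
    S.Finite := by
  subst hS
  have hEfin := coincidence_finite hp hq hne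
  refine Set.Finite.subset (hEfin.image p) ?_
  intro α hα
  obtain ⟨x, hx⟩ := surjective_of_holo hp hpc α
  have hx1 : x ∈ p ⁻¹' {α} := hx
  have hα' : p ⁻¹' {α} = q ⁻¹' {α} := hα
  have hx2 : q x = α := by have : x ∈ q ⁻¹' {α} := hα' ▸ hx1; exact this
  exact ⟨x, hx.trans hx2.symm, hx⟩
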